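/- For t, s ∈ [0,1], letting η_t(u) = χ_{[0,t]}(u)·g(t)·f(u) ∈ L²(0,1), the Parseval identity for the Hilbert basis (Φ_{n,k}) of the closure of E_f gives Σ_{n=0}^∞ Σ_{0≤k<2^{n−1}} Ψ_{n,k}(t)·Ψ_{n,k}(s) = (η_t, η_s) = g(t)·g(s)·h(min(t,s)). -/

import Mathlib

open MeasureTheory intervalIntegral

/-- `h(t) = ∫₀ᵗ f(u)² du`. -/
noncomputable def hFun (f : ℝ → ℝ) (t : ℝ) : ℝ := ∫ u in (0:ℝ)..t, (f u) ^ 2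

/-- Left endpoint `l_{n,k} = 2k·2⁻ⁿ` of the dyadic support `S_{n,k}`. -/
noncomputable def lPt (n k : ℕ) : ℝ := (2 * k : ℝ) / 2 ^ n

/-- Midpoint `m_{n,k} = (2k+1)·2⁻ⁿ`. -/
noncomputable def mPt (n k : ℕ) : ℝ := (2 * k + 1 : ℝ) / 2 ^ n

/-- Right endpoint `r_{n,k} = 2(k+1)·2⁻ⁿ`. -/
noncomputable def rPt (n k : ℕ) : ℝ := (2 * k + 2 : ℝ) / 2 ^ n

/-- `L_{n,k} = √((h r − h m)/((h r − h l)(h m − h l)))`. -/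
noncomputable def Lcoef (f : ℝ → ℝ) (n k : ℕ) : ℝ :=
  Real.sqrt ((hFun f (rPt n k) - hFun f (mPt n k)) /
    ((hFun f (rPt n k) - hFun f (lPt n k)) * (hFun f (mPt n k) - hFun f (lPt n k))))

/-- `R_{n,k} = √((h m − h l)/((h r − h l)(h r − h m)))`. -/
noncomputable def Rcoef (f : ℝ → ℝ) (n k : ℕ) : ℝ :=
  Real.sqrt ((hFun f (mPt n k) - hFun f (lPt n k)) /
    ((hFun f (rPt n k) - hFun f (lPt n k)) * (hFun f (rPt n k) - hFun f (mPt n k))))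

/-- The auxiliary Haar-like family `Φ_{n,k}`: `Φ_{0,0} = f/√(h 1 − h 0)` and, for
`n > 0`, `L_{n,k}·f` on `[l,m)`, `−R_{n,k}·f` on `[m,r)`, `0` elsewhere. -/
noncomputable def Phi (f : ℝ → ℝ) (n k : ℕ) (t : ℝ) : ℝ :=
  if n = 0 then f t / Real.sqrt (hFun f 1 - hFun f 0)
  else if lPt n k ≤ t ∧ t < mPt n k then Lcoef f n k * f t
  else if mPt n k ≤ t ∧ t < rPt n k then -(Rcoef f n k * f t)
  else 0
/-- The Schauder-like basis `Ψ_{n,k}`: `Ψ_{0,0}(t) = g t (h t − h 0)/√(h 1 − h 0)`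
and, for `n > 0`, `L_{n,k}·g(t)(h t − h l)` on `[l,m)`,
`R_{n,k}·g(t)(h r − h t)` on `[m,r)`, `0` elsewhere. -/
noncomputable def Psi (f g : ℝ → ℝ) (n k : ℕ) (t : ℝ) : ℝ :=
  if n = 0 then g t * (hFun f t - hFun f 0) / Real.sqrt (hFun f 1 - hFun f 0)
  else if lPt n k ≤ t ∧ t < mPt n k then Lcoef f n k * (g t * (hFun f t - hFun f (lPt n k)))
  else if mPt n k ≤ t ∧ t < rPt n k then Rcoef f n k * (g t * (hFun f (rPt n k) - hFun f t))
  else 0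

/-! ### Auxiliary machinery for the proof -/

namespace PsiParsevalAux

/-- Index of the dyadic cell of mesh `2⁻ᴺ` containing `t`. -/
noncomputable def dIdx (N : ℕ) (t : ℝ) : ℕ := ⌊(2:ℝ) ^ N * t⌋₊

/-- Left endpoint of the mesh-`2⁻ᴺ` cell of `t`. -/
noncomputable def aPt (N : ℕ) (t : ℝ) : ℝ := (dIdx N t : ℝ) / 2 ^ N

/-- Right endpoint of the mesh-`2⁻ᴺ` cell of `t`. -/
noncomputable def bPt (N : ℕ) (t : ℝ) : ℝ := ((dIdx N t : ℝ) + 1) / 2 ^ N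

/-- Closed form for the partial sums of the series. -/
noncomputable def Q (f : ℝ → ℝ) (N : ℕ) (t s : ℝ) : ℝ :=
  if s < bPt N t then
    hFun f (aPt N t) +
      (hFun f t - hFun f (aPt N t)) * (hFun f s - hFun f (aPt N t)) /
        (hFun f (bPt N t) - hFun f (aPt N t))
  else hFun f t

lemma two_pow_pos (N : ℕ) : (0:ℝ) < 2 ^ N := by positivity

lemma aPt_nonneg (N : ℕ) (t : ℝ) : 0 ≤ aPt N t := by
  unfold aPt; positivity

lemma aPt_le {t : ℝ} (ht : 0 ≤ t) (N : ℕ) : aPt N t ≤ t := by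
  rw [aPt, div_le_iff₀ (two_pow_pos N), mul_comm]
  exact Nat.floor_le (by positivity)

lemma lt_bPt (N : ℕ) (t : ℝ) : t < bPt N t := by
  rw [bPt, lt_div_iff₀ (two_pow_pos N), mul_comm]
  exact Nat.lt_floor_add_one _

lemma dIdx_lt {t : ℝ} (ht0 : 0 ≤ t) (ht1 : t < 1) (N : ℕ) : dIdx N t < 2 ^ N := by
  rw [dIdx, Nat.floor_lt (by positivity)]
  push_cast
  nlinarith [two_pow_pos N]

lemma bPt_le_one {t : ℝ} (ht0 : 0 ≤ t) (ht1 : t < 1) (N : ℕ) : bPt N t ≤ 1 := by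
  rw [bPt, div_le_one (two_pow_pos N)]
  have := dIdx_lt ht0 ht1 N
  have : (dIdx N t : ℝ) + 1 ≤ ((2 ^ N : ℕ) : ℝ) := by exact_mod_cast this
  simpa using this

lemma bPt_eq (N : ℕ) (t : ℝ) : bPt N t = aPt N t + 1 / 2 ^ N := by
  rw [bPt, aPt]; ring

lemma lPt_eq_aPt (N : ℕ) (t : ℝ) : lPt (N + 1) (dIdx N t) = aPt N t := by
  rw [lPt, aPt, pow_succ]; ring

lemma rPt_eq_bPt (N : ℕ) (t : ℝ) : rPt (N + 1) (dIdx N t) = bPt N t := by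
  rw [rPt, bPt, pow_succ]; ring

/-- At the next level, the cell index either doubles (if `t` is left of the midpoint)
or doubles plus one. -/
lemma dIdx_succ {t : ℝ} (ht : 0 ≤ t) (N : ℕ) :
    (t < mPt (N + 1) (dIdx N t) ∧ dIdx (N + 1) t = 2 * dIdx N t) ∨
      (mPt (N + 1) (dIdx N t) ≤ t ∧ dIdx (N + 1) t = 2 * dIdx N t + 1) := by
  have h2 : (0:ℝ) < 2 ^ (N + 1) := two_pow_pos (N + 1)
  have hp : (2:ℝ) ^ (N + 1) = 2 * 2 ^ N := by ring
  have hfl : (dIdx N t : ℝ) ≤ 2 ^ N * t := Nat.floor_le (by positivity)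
  have hfu : 2 ^ N * t < (dIdx N t : ℝ) + 1 := Nat.lt_floor_add_one _
  rcases lt_or_ge t (mPt (N + 1) (dIdx N t)) with hm | hm
  · left
    refine ⟨hm, ?_⟩
    rw [mPt, lt_div_iff₀ h2, hp] at hm
    rw [dIdx, Nat.floor_eq_iff (by positivity), hp]
    push_cast
    constructor <;> nlinarith [hfl, hfu, hm]
  · right
    refine ⟨hm, ?_⟩
    rw [mPt, div_le_iff₀ h2, hp] at hm
    rw [dIdx, Nat.floor_eq_iff (by positivity), hp]
    push_cast
    constructor <;> nlinarith [hfl, hfu, hm]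

/-- `Ψ_{n+1,k}` vanishes outside `[l, r)`. -/
lemma Psi_eq_zero (f g : ℝ → ℝ) (N k : ℕ) {t : ℝ}
    (h : t < lPt (N + 1) k ∨ rPt (N + 1) k ≤ t) : Psi f g (N + 1) k t = 0 := by
  have hlm : lPt (N + 1) k ≤ mPt (N + 1) k := by
    rw [lPt, mPt]
    gcongr <;> push_cast <;> linarith
  have hmr : mPt (N + 1) k ≤ rPt (N + 1) k := by
    rw [mPt, rPt]
    gcongr <;> push_cast <;> linarith
  rw [Psi, if_neg (Nat.succ_ne_zero N), if_neg, if_neg]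
  · rintro ⟨h1, h2⟩
    rcases h with h | h
    · exact absurd h1 (not_le.mpr (lt_of_lt_of_le h hlm))
    · exact absurd h2 (not_lt.mpr h)
  · rintro ⟨h1, h2⟩
    rcases h with h | h
    · exact absurd h1 (not_le.mpr h)
    · exact absurd h2 (not_lt.mpr (hmr.trans h))

/-- `Ψ_{n+1,k}(t)` vanishes unless `k` is the cell index of `t`. -/
lemma Psi_eq_zero_of_ne (f g : ℝ → ℝ) {N k : ℕ} {t : ℝ} (ht : 0 ≤ t)
    (hk : k ≠ dIdx N t) : Psi f g (N + 1) k t = 0 := by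
  apply Psi_eq_zero
  have hfl : (dIdx N t : ℝ) ≤ 2 ^ N * t := Nat.floor_le (by positivity)
  have hfu : 2 ^ N * t < (dIdx N t : ℝ) + 1 := Nat.lt_floor_add_one _
  have h2 : (0:ℝ) < 2 ^ (N + 1) := two_pow_pos (N + 1)
  rcases lt_or_gt_of_ne hk with h | h
  · right
    rw [rPt, div_le_iff₀ h2]
    have : (k : ℝ) + 1 ≤ (dIdx N t : ℝ) := by exact_mod_cast Nat.succ_le_of_lt h
    calc (2 * (k:ℕ) + 2 : ℝ) = 2 * ((k:ℝ) + 1) := by ring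
      _ ≤ 2 * (dIdx N t : ℝ) := by linarith
      _ ≤ 2 * (2 ^ N * t) := by linarith
      _ = t * 2 ^ (N + 1) := by ring
  · left
    rw [lPt, lt_div_iff₀ h2]
    have : (dIdx N t : ℝ) + 1 ≤ (k : ℝ) := by exact_mod_cast Nat.succ_le_of_lt h
    calc t * 2 ^ (N + 1) = 2 * (2 ^ N * t) := by ring
      _ < 2 * ((dIdx N t : ℝ) + 1) := by linarith
      _ ≤ 2 * (k : ℝ) := by linarith
      _ = (2 * (k:ℕ) : ℝ) := by push_cast; ring

lemma Psi_left (f g : ℝ → ℝ) (N k : ℕ) {t : ℝ}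
    (h1 : lPt (N + 1) k ≤ t) (h2 : t < mPt (N + 1) k) :
    Psi f g (N + 1) k t = Lcoef f (N + 1) k * (g t * (hFun f t - hFun f (lPt (N + 1) k))) := by
  rw [Psi, if_neg (Nat.succ_ne_zero N), if_pos ⟨h1, h2⟩]

lemma Psi_right (f g : ℝ → ℝ) (N k : ℕ) {t : ℝ}
    (h1 : mPt (N + 1) k ≤ t) (h2 : t < rPt (N + 1) k) :
    Psi f g (N + 1) k t = Rcoef f (N + 1) k * (g t * (hFun f (rPt (N + 1) k) - hFun f t)) := by
  rw [Psi, if_neg (Nat.succ_ne_zero N),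
    if_neg (by rintro ⟨_, hc⟩; exact absurd h1 (not_le.mpr hc)), if_pos ⟨h1, h2⟩]

lemma aPt_succ_left {t : ℝ} {N : ℕ} (hd : dIdx (N + 1) t = 2 * dIdx N t) :
    aPt (N + 1) t = aPt N t := by
  rw [← lPt_eq_aPt]; unfold aPt lPt; rw [hd]; push_cast; ring

lemma bPt_succ_left {t : ℝ} {N : ℕ} (hd : dIdx (N + 1) t = 2 * dIdx N t) :
    bPt (N + 1) t = mPt (N + 1) (dIdx N t) := by
  unfold bPt mPt; rw [hd]; push_cast; ring

lemma aPt_succ_right {t : ℝ} {N : ℕ} (hd : dIdx (N + 1) t = 2 * dIdx N t + 1) :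
    aPt (N + 1) t = mPt (N + 1) (dIdx N t) := by
  unfold aPt mPt; rw [hd]; push_cast; ring

lemma bPt_succ_right {t : ℝ} {N : ℕ} (hd : dIdx (N + 1) t = 2 * dIdx N t + 1) :
    bPt (N + 1) t = bPt N t := by
  rw [← rPt_eq_bPt]; unfold bPt rPt; rw [hd]; push_cast; ring

lemma aPt_lt_mPt (N : ℕ) (t : ℝ) : aPt N t < mPt (N + 1) (dIdx N t) := by
  rw [← lPt_eq_aPt]; unfold lPt mPt
  rw [div_lt_div_iff₀ (two_pow_pos _) (two_pow_pos _)]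
  push_cast
  nlinarith [two_pow_pos (N + 1)]

lemma mPt_lt_bPt (N : ℕ) (t : ℝ) : mPt (N + 1) (dIdx N t) < bPt N t := by
  rw [← rPt_eq_bPt]; unfold mPt rPt
  rw [div_lt_div_iff₀ (two_pow_pos _) (two_pow_pos _)]
  push_cast
  nlinarith [two_pow_pos (N + 1)]

lemma mPt_nonneg (n k : ℕ) : 0 ≤ mPt n k := by
  unfold mPt; positivity

/-- The inductive step: adding level `N+1` of the series refines `Q f N` to `Q f (N+1)`. -/
lemma sum_step (f : ℝ → ℝ) (hmono : StrictMonoOn (hFun f) (Set.Icc 0 1))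
    {t s : ℝ} (ht0 : 0 ≤ t) (hts : t ≤ s) (hs1 : s ≤ 1) (ht1 : t < 1) (N : ℕ) :
    Q f (N + 1) t s = Q f N t s +
      ∑ k ∈ Finset.range (2 ^ N),
        Psi f (fun _ => 1) (N + 1) k t * Psi f (fun _ => 1) (N + 1) k s := by
  have hs0 : 0 ≤ s := ht0.trans hts
  set K := dIdx N t with hKdef
  have hsum : ∑ k ∈ Finset.range (2 ^ N),
      Psi f (fun _ => 1) (N + 1) k t * Psi f (fun _ => 1) (N + 1) k s
      = Psi f (fun _ => 1) (N + 1) K t * Psi f (fun _ => 1) (N + 1) K s := by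
    apply Finset.sum_eq_single_of_mem
    · exact Finset.mem_range.mpr (dIdx_lt ht0 ht1 N)
    · intro k _ hk
      rw [Psi_eq_zero_of_ne f _ ht0 hk, zero_mul]
  have hlt : aPt N t ≤ t := aPt_le ht0 N
  have htr : t < bPt N t := lt_bPt N t
  have hlm : aPt N t < mPt (N + 1) K := aPt_lt_mPt N t
  have hmr : mPt (N + 1) K < bPt N t := mPt_lt_bPt N t
  have hl0 : 0 ≤ aPt N t := aPt_nonneg N t
  have hr1 : bPt N t ≤ 1 := bPt_le_one ht0 ht1 N
  have hmem_l : aPt N t ∈ Set.Icc (0:ℝ) 1 := ⟨hl0, hlt.trans ht1.le⟩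
  have hmem_m : mPt (N + 1) K ∈ Set.Icc (0:ℝ) 1 := ⟨mPt_nonneg _ _, hmr.le.trans hr1⟩
  have hmem_r : bPt N t ∈ Set.Icc (0:ℝ) 1 := ⟨hl0.trans (hlm.le.trans hmr.le), hr1⟩
  have hHlm : hFun f (aPt N t) < hFun f (mPt (N + 1) K) := hmono hmem_l hmem_m hlm
  have hHmr : hFun f (mPt (N + 1) K) < hFun f (bPt N t) := hmono hmem_m hmem_r hmr
  have hHlr : hFun f (aPt N t) < hFun f (bPt N t) := hmono hmem_l hmem_r (hlm.trans hmr)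
  have hne1 : hFun f (mPt (N + 1) K) - hFun f (aPt N t) ≠ 0 := ne_of_gt (sub_pos.mpr hHlm)
  have hne2 : hFun f (bPt N t) - hFun f (aPt N t) ≠ 0 := ne_of_gt (sub_pos.mpr hHlr)
  have hne3 : hFun f (bPt N t) - hFun f (mPt (N + 1) K) ≠ 0 := ne_of_gt (sub_pos.mpr hHmr)
  have hL2 : Lcoef f (N + 1) K * Lcoef f (N + 1) K =
      (hFun f (bPt N t) - hFun f (mPt (N + 1) K)) /
        ((hFun f (bPt N t) - hFun f (aPt N t)) *
          (hFun f (mPt (N + 1) K) - hFun f (aPt N t))) := by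
    unfold Lcoef
    rw [lPt_eq_aPt, rPt_eq_bPt]
    exact Real.mul_self_sqrt (le_of_lt (div_pos (sub_pos.mpr hHmr)
      (mul_pos (sub_pos.mpr hHlr) (sub_pos.mpr hHlm))))
  have hR2 : Rcoef f (N + 1) K * Rcoef f (N + 1) K =
      (hFun f (mPt (N + 1) K) - hFun f (aPt N t)) /
        ((hFun f (bPt N t) - hFun f (aPt N t)) *
          (hFun f (bPt N t) - hFun f (mPt (N + 1) K))) := by
    unfold Rcoef
    rw [lPt_eq_aPt, rPt_eq_bPt]
    exact Real.mul_self_sqrt (le_of_lt (div_pos (sub_pos.mpr hHlm)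
      (mul_pos (sub_pos.mpr hHlr) (sub_pos.mpr hHmr))))
  have hLR : Lcoef f (N + 1) K * Rcoef f (N + 1) K =
      1 / (hFun f (bPt N t) - hFun f (aPt N t)) := by
    unfold Lcoef Rcoef
    rw [lPt_eq_aPt, rPt_eq_bPt,
      ← Real.sqrt_mul (le_of_lt (div_pos (sub_pos.mpr hHmr)
        (mul_pos (sub_pos.mpr hHlr) (sub_pos.mpr hHlm))))]
    rw [show (hFun f (bPt N t) - hFun f (mPt (N + 1) K)) /
        ((hFun f (bPt N t) - hFun f (aPt N t)) * (hFun f (mPt (N + 1) K) - hFun f (aPt N t))) *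
        ((hFun f (mPt (N + 1) K) - hFun f (aPt N t)) /
          ((hFun f (bPt N t) - hFun f (aPt N t)) * (hFun f (bPt N t) - hFun f (mPt (N + 1) K)))) =
        (1 / (hFun f (bPt N t) - hFun f (aPt N t))) ^ 2 by field_simp]
    exact Real.sqrt_sq (le_of_lt (one_div_pos.mpr (sub_pos.mpr hHlr)))
  rw [hsum]
  rcases lt_or_ge s (bPt N t) with hsb | hsb
  · -- `t` and `s` lie in the same cell `[aPt N t, bPt N t)`
    have hQ0 : Q f N t s = hFun f (aPt N t) +
        (hFun f t - hFun f (aPt N t)) * (hFun f s - hFun f (aPt N t)) /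
          (hFun f (bPt N t) - hFun f (aPt N t)) := by
      unfold Q; rw [if_pos hsb]
    rcases dIdx_succ ht0 N with ⟨htm, hd⟩ | ⟨htm, hd⟩
    · -- `t` in the left half `[l, m)`
      have hPt : Psi f (fun _ => 1) (N + 1) K t =
          Lcoef f (N + 1) K * (hFun f t - hFun f (aPt N t)) := by
        rw [Psi_left f _ N _ (by rw [lPt_eq_aPt]; exact hlt) htm, lPt_eq_aPt]
        simp [hKdef]
      rcases lt_or_ge s (mPt (N + 1) K) with hsm | hsm
      · -- `s` also in the left half
        have hPs : Psi f (fun _ => 1) (N + 1) K s =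
            Lcoef f (N + 1) K * (hFun f s - hFun f (aPt N t)) := by
          rw [Psi_left f _ N _ (by rw [lPt_eq_aPt]; exact hlt.trans hts) hsm, lPt_eq_aPt]
          simp
        have hQ1 : Q f (N + 1) t s = hFun f (aPt N t) +
            (hFun f t - hFun f (aPt N t)) * (hFun f s - hFun f (aPt N t)) /
              (hFun f (mPt (N + 1) K) - hFun f (aPt N t)) := by
          unfold Q
          rw [bPt_succ_left hd, aPt_succ_left hd, if_pos hsm]
        rw [hQ1, hQ0, hPt, hPs]
        rw [show Lcoef f (N + 1) K * (hFun f t - hFun f (aPt N t)) *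
            (Lcoef f (N + 1) K * (hFun f s - hFun f (aPt N t))) =
            Lcoef f (N + 1) K * Lcoef f (N + 1) K *
              ((hFun f t - hFun f (aPt N t)) * (hFun f s - hFun f (aPt N t))) by ring, hL2]
        field_simp
        ring
      · -- `s` in the right half
        have hPs : Psi f (fun _ => 1) (N + 1) K s =
            Rcoef f (N + 1) K * (hFun f (bPt N t) - hFun f s) := by
          rw [Psi_right f _ N _ hsm (by rw [rPt_eq_bPt]; exact hsb), rPt_eq_bPt]
          simp
        have hQ1 : Q f (N + 1) t s = hFun f t := by
          unfold Q
          rw [bPt_succ_left hd, if_neg (not_lt.mpr hsm)]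
        rw [hQ1, hQ0, hPt, hPs]
        rw [show Lcoef f (N + 1) K * (hFun f t - hFun f (aPt N t)) *
            (Rcoef f (N + 1) K * (hFun f (bPt N t) - hFun f s)) =
            Lcoef f (N + 1) K * Rcoef f (N + 1) K *
              ((hFun f t - hFun f (aPt N t)) * (hFun f (bPt N t) - hFun f s)) by ring, hLR]
        field_simp
        ring
    · -- `t` (hence `s`) in the right half `[m, r)`
      have hsm : mPt (N + 1) K ≤ s := htm.trans hts
      have hPt : Psi f (fun _ => 1) (N + 1) K t =
          Rcoef f (N + 1) K * (hFun f (bPt N t) - hFun f t) := by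
        rw [Psi_right f _ N _ htm (by rw [rPt_eq_bPt]; exact htr), rPt_eq_bPt]
        simp [hKdef]
      have hPs : Psi f (fun _ => 1) (N + 1) K s =
          Rcoef f (N + 1) K * (hFun f (bPt N t) - hFun f s) := by
        rw [Psi_right f _ N _ hsm (by rw [rPt_eq_bPt]; exact hsb), rPt_eq_bPt]
        simp
      have hQ1 : Q f (N + 1) t s = hFun f (mPt (N + 1) K) +
          (hFun f t - hFun f (mPt (N + 1) K)) * (hFun f s - hFun f (mPt (N + 1) K)) /
            (hFun f (bPt N t) - hFun f (mPt (N + 1) K)) := by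
        unfold Q
        rw [bPt_succ_right hd, aPt_succ_right hd, if_pos hsb]
      rw [hQ1, hQ0, hPt, hPs]
      rw [show Rcoef f (N + 1) K * (hFun f (bPt N t) - hFun f t) *
          (Rcoef f (N + 1) K * (hFun f (bPt N t) - hFun f s)) =
          Rcoef f (N + 1) K * Rcoef f (N + 1) K *
            ((hFun f (bPt N t) - hFun f t) * (hFun f (bPt N t) - hFun f s)) by ring, hR2]
      field_simp
      ring
  · -- `s` is beyond the cell of `t`: everything is already `hFun f t`
    have hPs : Psi f (fun _ => 1) (N + 1) K s = 0 :=
      Psi_eq_zero f _ N K (Or.inr (by rw [rPt_eq_bPt]; exact hsb))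
    have hQ0 : Q f N t s = hFun f t := by
      unfold Q; rw [if_neg (not_lt.mpr hsb)]
    have hQ1 : Q f (N + 1) t s = hFun f t := by
      unfold Q
      have hb : bPt (N + 1) t ≤ s := by
        rcases dIdx_succ ht0 N with ⟨_, hd⟩ | ⟨_, hd⟩
        · rw [bPt_succ_left hd]; exact hmr.le.trans hsb
        · rw [bPt_succ_right hd]; exact hsb
      rw [if_neg (not_lt.mpr hb)]
    rw [hQ1, hQ0, hPs, mul_zero, add_zero]

lemma hFun_zero (f : ℝ → ℝ) : hFun f 0 = 0 := intervalIntegral.integral_same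

lemma dIdx_zero {t : ℝ} (ht1 : t < 1) : dIdx 0 t = 0 := by
  unfold dIdx
  rw [Nat.floor_eq_zero]
  simpa using ht1

lemma aPt_zero {t : ℝ} (ht1 : t < 1) : aPt 0 t = 0 := by
  unfold aPt; rw [dIdx_zero ht1]; norm_num

lemma bPt_zero {t : ℝ} (ht1 : t < 1) : bPt 0 t = 1 := by
  unfold bPt; rw [dIdx_zero ht1]; norm_num

lemma sum_base (f : ℝ → ℝ) (hmono : StrictMonoOn (hFun f) (Set.Icc 0 1))
    {t s : ℝ} (ht0 : 0 ≤ t) (hts : t ≤ s) (hs1 : s ≤ 1) (ht1 : t < 1) :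
    ∑ k ∈ Finset.range (2 ^ (0 - 1)), Psi f (fun _ => 1) 0 k t * Psi f (fun _ => 1) 0 k s
      = Q f 0 t s := by
  have h1 : 0 < hFun f 1 :=
    hFun_zero f ▸ hmono ⟨le_refl 0, zero_le_one⟩ ⟨zero_le_one, le_refl 1⟩ one_pos
  have hPsi : ∀ x : ℝ, Psi f (fun _ => 1) 0 0 x = hFun f x / Real.sqrt (hFun f 1) := by
    intro x; rw [Psi, if_pos rfl]; simp [hFun_zero]
  rw [show (2:ℕ) ^ (0 - 1) = 1 from by norm_num, Finset.sum_range_one, hPsi, hPsi,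
    div_mul_div_comm, Real.mul_self_sqrt h1.le]
  unfold Q
  rw [aPt_zero ht1, bPt_zero ht1, hFun_zero]
  rcases lt_or_ge s 1 with hs1' | hs1'
  · rw [if_pos hs1']; ring
  · have hseq : s = 1 := le_antisymm hs1 hs1'
    rw [if_neg (not_lt.mpr hs1'), hseq]
    field_simp

lemma partial_sum (f : ℝ → ℝ) (hmono : StrictMonoOn (hFun f) (Set.Icc 0 1))
    {t s : ℝ} (ht0 : 0 ≤ t) (hts : t ≤ s) (hs1 : s ≤ 1) (ht1 : t < 1) (N : ℕ) :
    ∑ n ∈ Finset.range (N + 1), (∑ k ∈ Finset.range (2 ^ (n - 1)),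
        Psi f (fun _ => 1) n k t * Psi f (fun _ => 1) n k s) = Q f N t s := by
  induction N with
  | zero => rw [Finset.sum_range_one]; exact sum_base f hmono ht0 hts hs1 ht1
  | succ N ih =>
      rw [Finset.sum_range_succ, ih]
      simp only [Nat.add_sub_cancel]
      rw [sum_step f hmono ht0 hts hs1 ht1 N]

lemma hFun_continuous (f : ℝ → ℝ) (hf : Continuous f) : Continuous (hFun f) :=
  intervalIntegral.continuous_primitive (fun a b => (hf.pow 2).intervalIntegrable a b) 0

/-- The diagonal convergence: `Q f N t t → hFun f t`. -/
lemma Q_tendsto (f : ℝ → ℝ) (hf : Continuous f) (hmono : StrictMonoOn (hFun f) (Set.Icc 0 1))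
    {t : ℝ} (ht0 : 0 ≤ t) (ht1 : t < 1) :
    Filter.Tendsto (fun N : ℕ => Q f N t t) Filter.atTop (nhds (hFun f t)) := by
  have hmem_t : t ∈ Set.Icc (0:ℝ) 1 := ⟨ht0, ht1.le⟩
  have hbnd : ∀ N : ℕ, hFun f (aPt N t) ≤ Q f N t t ∧ Q f N t t ≤ hFun f t := by
    intro N
    have hlt : aPt N t ≤ t := aPt_le ht0 N
    have htb : t < bPt N t := lt_bPt N t
    have hmem_l : aPt N t ∈ Set.Icc (0:ℝ) 1 := ⟨aPt_nonneg N t, hlt.trans ht1.le⟩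
    have hmem_b : bPt N t ∈ Set.Icc (0:ℝ) 1 :=
      ⟨(aPt_nonneg N t).trans (hlt.trans htb.le), bPt_le_one ht0 ht1 N⟩
    have hHa : hFun f (aPt N t) ≤ hFun f t := hmono.monotoneOn hmem_l hmem_t hlt
    have hHb : hFun f t < hFun f (bPt N t) := hmono hmem_t hmem_b htb
    have hD : 0 < hFun f (bPt N t) - hFun f (aPt N t) := by linarith
    have hQ : Q f N t t = hFun f (aPt N t) +
        (hFun f t - hFun f (aPt N t)) * (hFun f t - hFun f (aPt N t)) /
          (hFun f (bPt N t) - hFun f (aPt N t)) := by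
      unfold Q; rw [if_pos htb]
    constructor
    · have : 0 ≤ (hFun f t - hFun f (aPt N t)) * (hFun f t - hFun f (aPt N t)) /
          (hFun f (bPt N t) - hFun f (aPt N t)) := div_nonneg (mul_self_nonneg _) hD.le
      rw [hQ]; linarith
    · have hdle : (hFun f t - hFun f (aPt N t)) * (hFun f t - hFun f (aPt N t)) /
          (hFun f (bPt N t) - hFun f (aPt N t)) ≤ hFun f t - hFun f (aPt N t) := by
        rw [div_le_iff₀ hD]
        nlinarith
      rw [hQ]; linarith
  have hhalf : Filter.Tendsto (fun N : ℕ => (1:ℝ) / 2 ^ N) Filter.atTop (nhds 0) := by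
    have := tendsto_pow_atTop_nhds_zero_of_lt_one
      (by norm_num : (0:ℝ) ≤ 1/2) (by norm_num : (1/2:ℝ) < 1)
    simpa [div_pow] using this
  have haconv : Filter.Tendsto (fun N : ℕ => aPt N t) Filter.atTop (nhds t) := by
    refine tendsto_of_tendsto_of_tendsto_of_le_of_le
      (g := fun N : ℕ => t - 1 / 2 ^ N) (h := fun _ : ℕ => t) ?_ ?_ ?_ ?_
    · simpa using Filter.Tendsto.const_sub t hhalf
    · exact tendsto_const_nhds
    · intro N
      have := lt_bPt N t
      rw [bPt_eq] at this
      linarith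
    · intro N; exact aPt_le ht0 N
  have hHaconv : Filter.Tendsto (fun N : ℕ => hFun f (aPt N t)) Filter.atTop (nhds (hFun f t)) :=
    ((hFun_continuous f hf).continuousAt.tendsto).comp haconv
  exact tendsto_of_tendsto_of_tendsto_of_le_of_le hHaconv tendsto_const_nhds
    (fun N => (hbnd N).1) (fun N => (hbnd N).2)

/-- The core of the theorem: the case `g = 1`, `t ≤ s`. -/
lemma core (f : ℝ → ℝ) (hf : Continuous f) (hmono : StrictMonoOn (hFun f) (Set.Icc 0 1))
    {t s : ℝ} (ht0 : 0 ≤ t) (hts : t ≤ s) (hs1 : s ≤ 1) :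
    HasSum (fun n : ℕ => ∑ k ∈ Finset.range (2 ^ (n - 1)),
        Psi f (fun _ => 1) n k t * Psi f (fun _ => 1) n k s) (hFun f t) := by
  have h1 : 0 < hFun f 1 :=
    hFun_zero f ▸ hmono ⟨le_refl 0, zero_le_one⟩ ⟨zero_le_one, le_refl 1⟩ one_pos
  rcases eq_or_lt_of_le (hts.trans hs1) with ht1 | ht1
  · -- `t = 1`, hence `s = 1`: only the `n = 0` term contributes.
    have hseq : s = 1 := le_antisymm hs1 (ht1 ▸ hts)
    subst hseq
    have ht1' : t = 1 := ht1
    subst ht1'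
    have hz : ∀ n ∉ ({0} : Finset ℕ), ∑ k ∈ Finset.range (2 ^ (n - 1)),
        Psi f (fun _ => 1) n k 1 * Psi f (fun _ => 1) n k 1 = 0 := by
      intro n hn
      have hn0 : n ≠ 0 := by simpa using hn
      obtain ⟨M, rfl⟩ := Nat.exists_eq_succ_of_ne_zero hn0
      apply Finset.sum_eq_zero
      intro k hk
      have hk' : k < 2 ^ M := by simpa [Nat.succ_sub_one] using Finset.mem_range.mp hk
      have hr : rPt (M + 1) k ≤ 1 := by
        rw [rPt, div_le_one (two_pow_pos _)]
        have : (k:ℝ) + 1 ≤ 2 ^ M := by exact_mod_cast hk'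
        rw [pow_succ]
        push_cast
        nlinarith [two_pow_pos M]
      rw [Psi_eq_zero f _ M k (Or.inr hr), zero_mul]
    have hs := hasSum_sum_of_ne_finset_zero (L := SummationFilter.unconditional ℕ) hz
    rw [Finset.sum_singleton] at hs
    have hval : ∑ k ∈ Finset.range (2 ^ (0 - 1)),
        Psi f (fun _ => 1) 0 k 1 * Psi f (fun _ => 1) 0 k 1 = hFun f 1 := by
      rw [show (2:ℕ) ^ (0 - 1) = 1 from by norm_num, Finset.sum_range_one, Psi, if_pos rfl]
      simp only [hFun_zero, sub_zero, one_mul]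
      rw [div_mul_div_comm, Real.mul_self_sqrt h1.le, mul_div_assoc, div_self h1.ne', mul_one]
    rw [hval] at hs
    exact hs
  · rcases eq_or_lt_of_le hts with hteq | hlt'
    · -- `t = s < 1`: nonnegative terms, use the closed form and take limits.
      subst hteq
      have hnn : ∀ n : ℕ, 0 ≤ ∑ k ∈ Finset.range (2 ^ (n - 1)),
          Psi f (fun _ => 1) n k t * Psi f (fun _ => 1) n k t :=
        fun n => Finset.sum_nonneg fun k _ => mul_self_nonneg _
      rw [hasSum_iff_tendsto_nat_of_nonneg hnn]
      rw [← Filter.tendsto_add_atTop_iff_nat 1]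
      have hpart := fun N => partial_sum f hmono ht0 le_rfl ht1.le ht1 N
      simp only [hpart]
      exact Q_tendsto f hf hmono ht0 ht1
    · -- `t < s`: the series is eventually zero.
      obtain ⟨N0, hN0⟩ := exists_pow_lt_of_lt_one (sub_pos.mpr hlt') (by norm_num : (1:ℝ)/2 < 1)
      have hN0' : 1 / 2 ^ N0 < s - t := by
        rw [div_pow, one_pow] at hN0; exact hN0
      have ht1' : t < 1 := lt_of_lt_of_le hlt' hs1
      have hQconst : ∀ N, N0 ≤ N → Q f N t s = hFun f t := by
        intro N hN
        unfold Q
        rw [if_neg (not_lt.mpr ?_)]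
        calc bPt N t = aPt N t + 1 / 2 ^ N := bPt_eq N t
          _ ≤ t + 1 / 2 ^ N := by linarith [aPt_le ht0 N]
          _ ≤ t + 1 / 2 ^ N0 := by
              have : (2:ℝ) ^ N0 ≤ 2 ^ N := pow_le_pow_right₀ (by norm_num) hN
              gcongr
          _ ≤ s := by linarith
      have hz : ∀ n ∉ Finset.range (N0 + 1), ∑ k ∈ Finset.range (2 ^ (n - 1)),
          Psi f (fun _ => 1) n k t * Psi f (fun _ => 1) n k s = 0 := by
        intro n hn
        have hge : N0 + 1 ≤ n := by simpa [Finset.mem_range, not_lt] using hn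
        obtain ⟨M, rfl⟩ : ∃ M, n = M + 1 := ⟨n - 1, by omega⟩
        have hM : N0 ≤ M := by omega
        have e1 := partial_sum f hmono ht0 hts hs1 ht1' (M + 1)
        have e2 := partial_sum f hmono ht0 hts hs1 ht1' M
        have e3 : ∑ k ∈ Finset.range (2 ^ (M + 1 - 1)),
            Psi f (fun _ => 1) (M + 1) k t * Psi f (fun _ => 1) (M + 1) k s
            = Q f (M + 1) t s - Q f M t s := by
          rw [← e1, ← e2, Finset.sum_range_succ]; ring
        rw [e3, hQconst (M + 1) (by omega), hQconst M hM, sub_self]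
      have hsum := hasSum_sum_of_ne_finset_zero (L := SummationFilter.unconditional ℕ) hz
      have hval : ∑ n ∈ Finset.range (N0 + 1), (∑ k ∈ Finset.range (2 ^ (n - 1)),
          Psi f (fun _ => 1) n k t * Psi f (fun _ => 1) n k s) = hFun f t := by
        rw [partial_sum f hmono ht0 hts hs1 ht1' N0]
        exact hQconst N0 le_rfl
      rw [hval] at hsum
      exact hsum

end PsiParsevalAux

/-- the Parseval identity for the basis `(Φ_{n,k})` gives, for
`t, s ∈ [0,1]`,
`Σ_{n,k} Ψ_{n,k}(t)·Ψ_{n,k}(s) = (η_t, η_s) = g t · g s · h (min t s)`. -/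
theorem Psi_parseval
    (f g : ℝ → ℝ) (hf : Continuous f) (hg : Continuous g)
    (hmono : StrictMonoOn (hFun f) (Set.Icc 0 1)) :
    ∀ t ∈ Set.Icc (0:ℝ) 1, ∀ s ∈ Set.Icc (0:ℝ) 1,
      HasSum (fun n : ℕ => ∑ k ∈ Finset.range (2 ^ (n - 1)),
          Psi f g n k t * Psi f g n k s)
        (g t * g s * hFun f (min t s)) := by
  intro t ht s hs
  have hfac : ∀ (n k : ℕ) (x : ℝ), Psi f g n k x = g x * Psi f (fun _ => 1) n k x := by
    intro n k x
    rw [Psi, Psi]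
    split_ifs <;> ring
  have hterm : ∀ n : ℕ, (∑ k ∈ Finset.range (2 ^ (n - 1)), Psi f g n k t * Psi f g n k s)
      = (g t * g s) * ∑ k ∈ Finset.range (2 ^ (n - 1)),
          Psi f (fun _ => 1) n k t * Psi f (fun _ => 1) n k s := by
    intro n
    rw [Finset.mul_sum]
    refine Finset.sum_congr rfl fun k _ => ?_
    rw [hfac, hfac]; ring
  rcases le_total t s with hts | hst
  · have hcore := PsiParsevalAux.core f hf hmono ht.1 hts hs.2
    have hmul := hcore.mul_left (g t * g s)
    rw [min_eq_left hts]
    have hfun : (fun n : ℕ => ∑ k ∈ Finset.range (2 ^ (n - 1)), Psi f g n k t * Psi f g n k s)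
        = fun n : ℕ => (g t * g s) * ∑ k ∈ Finset.range (2 ^ (n - 1)),
            Psi f (fun _ => 1) n k t * Psi f (fun _ => 1) n k s := funext hterm
    rw [hfun]
    exact hmul
  · have hcore := PsiParsevalAux.core f hf hmono hs.1 hst ht.2
    have hmul := hcore.mul_left (g t * g s)
    rw [min_eq_right hst]
    have hfun : (fun n : ℕ => ∑ k ∈ Finset.range (2 ^ (n - 1)), Psi f g n k t * Psi f g n k s)
        = fun n : ℕ => (g t * g s) * ∑ k ∈ Finset.range (2 ^ (n - 1)),
            Psi f (fun _ => 1) n k s * Psi f (fun _ => 1) n k t := by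
      funext n
      rw [hterm n]
      congr 1
      exact Finset.sum_congr rfl fun k _ => mul_comm _ _
    rw [hfun]
    exact hmul
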